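/- Let M ∈ 𝓛𝓒 with quotient sequence μ and dual sequence D defined by quotients δ_{j+1} := Σ_M(j) for integers j ≥ μ₁ and δ_{j+1} := 1 for −1 ≤ j < μ₁. Then there exists t₀ > 0 such that for all t ≥ t₀, Γ_M(t) ≤ log(Σ_D(t)) ≤ Γ_M(t) + 1, and consequently Γ_M(t)/log(Σ_D(t)) → 1 as t → ∞. -/

import Mathlib

open Filter Real

theorem stmt_16 (M : ℕ → ℝ) (μ : ℕ → ℝ) (Sig : ℝ → ℕ) (Γ : ℝ → ℝ)
    (δ D : ℕ → ℝ) (SigD : ℝ → ℕ)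
    (hMpos : ∀ j, 0 < M j) (hM0 : M 0 = 1) (hMnorm : M 0 ≤ M 1)
    (hMlc : ∀ j : ℕ, (M (j+1))^2 ≤ M j * M (j+2))
    (hMgrow : Filter.Tendsto (fun j : ℕ => (M j) ^ (1/(j:ℝ))) Filter.atTop Filter.atTop)
    (hμ0 : μ 0 = 1) (hμ : ∀ j : ℕ, μ (j+1) = M (j+1) / M j)
    (hSig : ∀ t : ℝ, Sig t = Set.ncard {j : ℕ | 1 ≤ j ∧ μ j ≤ t})
    (hΓ : ∀ s : ℝ, Γ s = sSup {t : ℝ | 0 ≤ t ∧ (Sig (Real.exp t) : ℝ) ≤ s})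
    (hδ0 : δ 0 = 1)
    (hδhigh : ∀ j : ℕ, μ 1 ≤ (j : ℝ) → δ (j+1) = (Sig (j : ℝ) : ℝ))
    (hδlow : ∀ j : ℕ, (j : ℝ) < μ 1 → δ (j+1) = 1)
    (hD : ∀ j : ℕ, D j = ∏ k ∈ Finset.range (j+1), δ k)
    (hSigD : ∀ t : ℝ, SigD t = Set.ncard {j : ℕ | 1 ≤ j ∧ δ j ≤ t}) :
    (∃ t₀ > (0:ℝ), ∀ t ≥ t₀,
        Γ t ≤ Real.log (SigD t : ℝ) ∧ Real.log (SigD t : ℝ) ≤ Γ t + 1) ∧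
      Filter.Tendsto (fun t : ℝ => Γ t / Real.log (SigD t : ℝ))
        Filter.atTop (nhds 1) := by
  have hμpos : ∀ j, 0 < μ j := by
    intro j
    cases j with
    | zero => rw [hμ0]; norm_num
    | succ j => rw [hμ]; exact div_pos (hMpos _) (hMpos _)
  have hμmono : Monotone μ := by
    apply monotone_nat_of_le_succ
    intro j
    cases j with
    | zero =>
      rw [hμ0, hμ 0, hM0, div_one]
      simpa [hM0] using hMnorm
    | succ j =>
      rw [hμ j, hμ (j+1), div_le_div_iff₀ (hMpos _) (hMpos _)]
      nlinarith [hMlc j, hMpos j, hMpos (j+1), hMpos (j+2)]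
  have hμ1 : (1:ℝ) ≤ μ 1 := by rw [hμ 0, hM0, div_one]; simpa [hM0] using hMnorm
  -- telescoping
  have hMprod : ∀ j : ℕ, M j = ∏ k ∈ Finset.range (j+1), μ k := by
    intro j
    induction j with
    | zero => simp [hM0, hμ0]
    | succ j ih =>
      have h0 : M j ≠ 0 := (hMpos j).ne'
      rw [Finset.prod_range_succ, ← ih, hμ j]
      field_simp
  -- μ tends to infinity
  have hμtop : Tendsto μ atTop atTop := by
    apply tendsto_atTop_atTop_of_monotone hμmono
    by_contra hB
    push_neg at hB
    obtain ⟨B, hBlt⟩ := hB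
    set B' : ℝ := max B 1 with hB'
    have hB1 : (1:ℝ) ≤ B' := le_max_right _ _
    have hbound : ∀ j : ℕ, 1 ≤ j → (M j) ^ (1/(j:ℝ)) ≤ B' ^ (2:ℝ) := by
      intro j hj
      have hMle : M j ≤ B' ^ (j+1) := by
        rw [hMprod j]
        calc ∏ k ∈ Finset.range (j+1), μ k ≤ ∏ k ∈ Finset.range (j+1), B' := by
              apply Finset.prod_le_prod
              · intro k _; exact (hμpos k).le
              · intro k _; exact le_trans (hBlt k).le (le_max_left _ _)
          _ = B' ^ (j+1) := by rw [Finset.prod_const, Finset.card_range]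
      have hjpos : (0:ℝ) < (j:ℝ) := by exact_mod_cast Nat.lt_of_lt_of_le Nat.zero_lt_one hj
      have h1 : (M j) ^ (1/(j:ℝ)) ≤ (B' ^ (j+1 : ℕ)) ^ (1/(j:ℝ)) :=
        Real.rpow_le_rpow (hMpos j).le hMle (by positivity)
      have h2 : (B' ^ (j+1 : ℕ)) ^ (1/(j:ℝ)) = B' ^ (((j:ℝ)+1) * (1/(j:ℝ))) := by
        rw [← Real.rpow_natCast B' (j+1), ← Real.rpow_mul (le_trans zero_le_one hB1)]
        push_cast
        ring_nf
      have h3 : ((j:ℝ)+1) * (1/(j:ℝ)) ≤ 2 := by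
        rw [mul_one_div, div_le_iff₀ hjpos]
        have : (1:ℝ) ≤ (j:ℝ) := by exact_mod_cast hj
        linarith
      calc (M j) ^ (1/(j:ℝ)) ≤ B' ^ (((j:ℝ)+1) * (1/(j:ℝ))) := by rw [← h2]; exact h1
        _ ≤ B' ^ (2:ℝ) := Real.rpow_le_rpow_of_exponent_le hB1 h3
    have := (hMgrow.eventually_gt_atTop (B' ^ (2:ℝ))).and (eventually_ge_atTop 1)
    obtain ⟨j, hj1, hj2⟩ := this.exists
    exact absurd (hbound j hj2) (not_le.mpr hj1)
  -- characterization of Sig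
  have hSigchar : ∀ (x : ℝ) (m : ℕ), Sig x ≤ m ↔ x < μ (m+1) := by
    intro x m
    constructor
    · intro h
      by_contra hx
      push_neg at hx
      obtain ⟨J, hJ⟩ := (hμtop.eventually_gt_atTop x).exists_forall_of_atTop
      have hSfin : {j : ℕ | 1 ≤ j ∧ μ j ≤ x}.Finite := by
        apply Set.Finite.subset (Set.finite_Iio J)
        intro j hj
        simp only [Set.mem_setOf_eq] at hj
        by_contra hjJ
        simp only [Set.mem_Iio, not_lt] at hjJ
        exact absurd hj.2 (not_le.mpr (hJ j hjJ))
      have hsub : Set.Icc 1 (m+1) ⊆ {j : ℕ | 1 ≤ j ∧ μ j ≤ x} := by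
        intro j hj
        obtain ⟨h1, h2⟩ := hj
        exact ⟨h1, le_trans (hμmono h2) hx⟩
      have hcard := Set.ncard_le_ncard hsub hSfin
      rw [← Finset.coe_Icc, Set.ncard_coe_finset, Nat.card_Icc] at hcard
      rw [hSig] at h
      omega
    · intro hx
      rw [hSig]
      have hsub : {j : ℕ | 1 ≤ j ∧ μ j ≤ x} ⊆ Set.Icc 1 m := by
        intro j hj
        obtain ⟨h1, h2⟩ := hj
        refine ⟨h1, ?_⟩
        by_contra hjm
        push_neg at hjm
        exact absurd (le_trans (hμmono hjm) h2) (not_le.mpr hx)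
      calc Set.ncard {j : ℕ | 1 ≤ j ∧ μ j ≤ x} ≤ (Set.Icc 1 m).ncard :=
            Set.ncard_le_ncard hsub (Set.finite_Icc 1 m)
        _ = m := by rw [← Finset.coe_Icc, Set.ncard_coe_finset, Nat.card_Icc]; omega
  -- Γ formula
  have hΓeq : ∀ t : ℝ, 1 ≤ t → 1 < μ (⌊t⌋₊ + 1) → Γ t = Real.log (μ (⌊t⌋₊+1)) := by
    intro t ht hμgt
    have hμp : 0 < μ (⌊t⌋₊+1) := hμpos _
    have hset : {s : ℝ | 0 ≤ s ∧ (Sig (Real.exp s) : ℝ) ≤ t} =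
        Set.Ico 0 (Real.log (μ (⌊t⌋₊+1))) := by
      ext s
      simp only [Set.mem_setOf_eq, Set.mem_Ico]
      refine and_congr_right fun _ => ?_
      rw [show ((Sig (Real.exp s) : ℝ) ≤ t ↔ Sig (Real.exp s) ≤ ⌊t⌋₊) from
        (Nat.le_floor_iff (le_trans zero_le_one ht)).symm]
      rw [hSigchar, Real.lt_log_iff_exp_lt hμp]
    rw [hΓ, hset, csSup_Ico (Real.log_pos hμgt)]
  -- SigD formula
  have hSigDeq : ∀ t : ℝ, 1 ≤ t → SigD t = ⌈μ (⌊t⌋₊+1) + 1⌉₊ - 1 := by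
    intro t ht
    set m := ⌊t⌋₊ with hm
    set K := ⌈μ (m+1) + 1⌉₊ with hK
    have hδiff : ∀ i : ℕ, δ (i+1) ≤ t ↔ (i:ℝ) < μ (m+1) := by
      intro i
      rcases lt_or_ge (i:ℝ) (μ 1) with hc | hc
      · constructor
        · intro _
          exact lt_of_lt_of_le hc (hμmono (Nat.le_add_left 1 m))
        · intro _
          rw [hδlow i hc]; exact ht
      · rw [hδhigh i hc]
        rw [show ((Sig (i:ℝ) : ℝ) ≤ t ↔ Sig (i:ℝ) ≤ m) from
          (Nat.le_floor_iff (le_trans zero_le_one ht)).symm]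
        rw [hSigchar]
    have hset : {j : ℕ | 1 ≤ j ∧ δ j ≤ t} = Set.Ico 1 K := by
      ext j
      simp only [Set.mem_setOf_eq, Set.mem_Ico]
      refine and_congr_right fun hj => ?_
      obtain ⟨i, rfl⟩ := Nat.exists_eq_add_of_le hj
      rw [add_comm 1 i, hδiff i]
      constructor
      · intro h
        rw [hK]
        rw [Nat.lt_ceil]
        push_cast
        linarith
      · intro h
        rw [hK, Nat.lt_ceil] at h
        push_cast at h
        linarith
    rw [hSigD, hset, ← Finset.coe_Ico, Set.ncard_coe_finset, Nat.card_Ico]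
  -- key bounds on SigD
  have hSigDbound : ∀ t : ℝ, 1 ≤ t → 1 ≤ μ (⌊t⌋₊+1) →
      μ (⌊t⌋₊+1) ≤ (SigD t : ℝ) ∧ (SigD t : ℝ) < μ (⌊t⌋₊+1) + 1 := by
    intro t ht hμ1'
    set m := ⌊t⌋₊ with hm
    set x := μ (m+1) with hx
    have hK1 : 1 ≤ ⌈x + 1⌉₊ := by
      rw [Nat.one_le_ceil_iff]; linarith
    have hcast : (SigD t : ℝ) = (⌈x + 1⌉₊ : ℝ) - 1 := by
      rw [hSigDeq t ht, ← hm, ← hx]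
      push_cast [hK1]
      ring
    constructor
    · rw [hcast]
      have := Nat.le_ceil (x + 1)
      linarith
    · rw [hcast]
      have : (⌈x + 1⌉₊ : ℝ) < (x + 1) + 1 := Nat.ceil_lt_add_one (by linarith)
      linarith
  -- choose threshold
  obtain ⟨J, hJ⟩ := (hμtop.eventually_ge_atTop 2).exists_forall_of_atTop
  set t₀ : ℝ := max (J:ℝ) 1 with ht₀
  have hkey : ∀ t : ℝ, t₀ ≤ t →
      Γ t ≤ Real.log (SigD t : ℝ) ∧ Real.log (SigD t : ℝ) ≤ Γ t + 1 := by
    intro t hts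
    have ht1 : (1:ℝ) ≤ t := le_trans (le_max_right _ _) hts
    have htJ : J ≤ ⌊t⌋₊ + 1 := by
      have : (J:ℝ) ≤ t := le_trans (le_max_left _ _) hts
      have := Nat.le_floor this
      omega
    have hμ2 : 2 ≤ μ (⌊t⌋₊+1) := hJ _ htJ
    have hμgt : 1 < μ (⌊t⌋₊+1) := by linarith
    have hΓt := hΓeq t ht1 hμgt
    obtain ⟨hlo, hhi⟩ := hSigDbound t ht1 (by linarith)
    set x := μ (⌊t⌋₊+1) with hxdef
    have hxpos : (0:ℝ) < x := by linarith
    constructor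
    · rw [hΓt]
      exact Real.log_le_log hxpos hlo
    · rw [hΓt]
      have h1 : Real.log (SigD t : ℝ) ≤ Real.log (x + 1) :=
        Real.log_le_log (by linarith) hhi.le
      have h2 : Real.log (x + 1) ≤ Real.log x + 1 := by
        rw [← Real.log_exp (Real.log x + 1), Real.exp_add, Real.exp_log hxpos]
        apply Real.log_le_log (by linarith)
        nlinarith [Real.exp_one_gt_d9]
      linarith
  have ht₀pos : (0:ℝ) < t₀ := lt_of_lt_of_le zero_lt_one (le_max_right _ _)
  refine ⟨⟨t₀, ht₀pos, fun t ht => hkey t ht⟩, ?_⟩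
  -- tendsto part
  have hΓtop : Tendsto Γ atTop atTop := by
    have hcomp : Tendsto (fun t : ℝ => Real.log (μ (⌊t⌋₊+1))) atTop atTop := by
      apply Real.tendsto_log_atTop.comp
      apply hμtop.comp
      exact (tendsto_add_atTop_nat 1).comp tendsto_nat_floor_atTop
    apply hcomp.congr'
    filter_upwards [eventually_ge_atTop t₀, eventually_ge_atTop (1:ℝ)] with t hts ht1
    have htJ : J ≤ ⌊t⌋₊ + 1 := by
      have : (J:ℝ) ≤ t := le_trans (le_max_left _ _) hts
      have := Nat.le_floor this
      omega
    exact (hΓeq t ht1 (by linarith [hJ _ htJ])).symm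
  have hev : ∀ᶠ t in atTop, Γ t ≤ Real.log (SigD t : ℝ) ∧
      Real.log (SigD t : ℝ) ≤ Γ t + 1 ∧ 1 ≤ Γ t := by
    filter_upwards [eventually_ge_atTop t₀, hΓtop.eventually_ge_atTop 1] with t hts hΓ1
    exact ⟨(hkey t hts).1, (hkey t hts).2, hΓ1⟩
  have hlow : Tendsto (fun t : ℝ => 1 - 1/(Γ t + 1)) atTop (nhds 1) := by
    have h1 : Tendsto (fun t : ℝ => Γ t + 1) atTop atTop :=
      tendsto_atTop_add_const_right _ 1 hΓtop
    have h2 : Tendsto (fun t : ℝ => 1/(Γ t + 1)) atTop (nhds 0) := by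
      simpa [one_div, Function.comp_def] using tendsto_inv_atTop_zero.comp h1
    have := (tendsto_const_nhds (x := (1:ℝ)) (f := atTop)).sub h2
    simpa using this
  apply tendsto_of_tendsto_of_tendsto_of_le_of_le' hlow tendsto_const_nhds
  · filter_upwards [hev] with t ⟨h1, h2, h3⟩
    have hLpos : (0:ℝ) < Real.log (SigD t : ℝ) := lt_of_lt_of_le (by linarith) h1
    have hΓ1pos : (0:ℝ) < Γ t + 1 := by linarith
    have heq : 1 - 1/(Γ t + 1) = Γ t/(Γ t + 1) := by field_simp; ring
    rw [heq, div_le_div_iff₀ hΓ1pos hLpos]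
    nlinarith
  · filter_upwards [hev] with t ⟨h1, h2, h3⟩
    have hLpos : (0:ℝ) < Real.log (SigD t : ℝ) := lt_of_lt_of_le (by linarith) h1
    exact div_le_one_of_le₀ h1 hLpos.le
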